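/- Let Λ ⊂ ℝ^n be a well-rounded full-rank lattice with basis matrix B. For i ∈ {1,...,n}, define the subset Λ̃_i = {z·B : z ∈ ℤ^n, z_i > 0}. Then Λ̃_i ∩ S(Λ) ≠ ∅ for all i, where S(Λ) is the set of shortest nonzero lattice vectors. -/

import Mathlib

theorem stmt_4 (n : ℕ) (B : Matrix (Fin n) (Fin n) ℝ) (hB : IsUnit B.det)
    (L : Set (EuclideanSpace ℝ (Fin n)))
    (hL : L = {v | ∃ z : Fin n → ℤ, ∀ j, v j = ∑ i, (z i : ℝ) * B i j})
    (lam : ℝ) (hlam : 0 < lam)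
    (hmin : ∀ v ∈ L, v ≠ 0 → lam ≤ ‖v‖)
    (S : Set (EuclideanSpace ℝ (Fin n)))
    (hS : S = {v ∈ L | ‖v‖ = lam})
    (hspan : Submodule.span ℝ S = ⊤)
    (Lt : Fin n → Set (EuclideanSpace ℝ (Fin n)))
    (hLt : ∀ i, Lt i =
      {v | ∃ z : Fin n → ℤ, (∀ j, v j = ∑ k, (z k : ℝ) * B k j) ∧ 0 < z i}) :
    ∀ i : Fin n, (Lt i ∩ S).Nonempty := by
  intro i
  have hBt : IsUnit B.transpose.det := by rwa [Matrix.det_transpose]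
  set A : Matrix (Fin n) (Fin n) ℝ := B.transpose⁻¹ with hA
  -- the linear functional extracting the i-th coordinate in the basis B
  set f : EuclideanSpace ℝ (Fin n) →ₗ[ℝ] ℝ :=
    (LinearMap.proj i).comp ((A.mulVecLin).comp
      (WithLp.linearEquiv 2 ℝ (Fin n → ℝ)).toLinearMap) with hfdef
  have hf : ∀ v : EuclideanSpace ℝ (Fin n), f v = A.mulVec v i := fun _ => rfl
  -- key: if v has coordinates z, then f v = z i
  have key : ∀ (v : EuclideanSpace ℝ (Fin n)) (z : Fin n → ℝ),
      (∀ j, v j = ∑ k, z k * B k j) → f v = z i := by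
    intro v z hz
    have hv : (v : Fin n → ℝ) = B.transpose.mulVec z := by
      funext j
      rw [hz j]
      simp [Matrix.mulVec, dotProduct, Matrix.transpose_apply, mul_comm]
    rw [hf, hv, Matrix.mulVec_mulVec, hA, Matrix.nonsing_inv_mul _ hBt,
      Matrix.one_mulVec]
  -- there exists v ∈ S with f v ≠ 0
  have hex : ∃ v ∈ S, f v ≠ 0 := by
    by_contra h
    push_neg at h
    have hsub : S ⊆ (LinearMap.ker f : Set (EuclideanSpace ℝ (Fin n))) := by
      intro v hv; exact h v hv
    have htop : (⊤ : Submodule ℝ (EuclideanSpace ℝ (Fin n))) ≤ LinearMap.ker f := by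
      rw [← hspan]; exact Submodule.span_le.mpr hsub
    have h1 : f (WithLp.toLp 2 (B.transpose.mulVec (Pi.single i 1))) = 1 := by
      rw [hf, WithLp.ofLp_toLp, Matrix.mulVec_mulVec, hA, Matrix.nonsing_inv_mul _ hBt,
        Matrix.one_mulVec]
      simp
    have h0 : f (WithLp.toLp 2 (B.transpose.mulVec (Pi.single i 1))) = 0 :=
      htop (Submodule.mem_top)
    rw [h1] at h0
    exact one_ne_zero h0
  obtain ⟨v, hvS, hfv⟩ := hex
  obtain ⟨hvL, hvnorm⟩ := by rw [hS] at hvS; exact hvS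
  obtain ⟨z, hz⟩ := by rw [hL] at hvL; exact hvL
  have hfz : f v = (z i : ℝ) := key v (fun k => (z k : ℝ)) hz
  have hzi : z i ≠ 0 := by
    intro h; apply hfv; rw [hfz, h]; exact Int.cast_zero
  have hnegcoord : ∀ j, (-v : EuclideanSpace ℝ (Fin n)) j
      = ∑ k, ((-z) k : ℝ) * B k j := by
    intro j
    have h1 : (-v : EuclideanSpace ℝ (Fin n)) j = -(v j) := rfl
    rw [h1, hz j, ← Finset.sum_neg_distrib]
    exact Finset.sum_congr rfl fun k _ => by simp [Pi.neg_apply, mul_comm]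
  have hvSmem : v ∈ S := by rw [hS]; exact ⟨hvL, hvnorm⟩
  rcases lt_or_gt_of_ne hzi with hneg | hpos
  · refine ⟨-v, ?_, ?_⟩
    · rw [hLt]
      exact ⟨-z, hnegcoord, by simp only [Pi.neg_apply]; omega⟩
    · rw [hS]
      constructor
      · rw [hL]; exact ⟨-z, hnegcoord⟩
      · rw [norm_neg]; exact hvnorm
  · exact ⟨v, by rw [hLt]; exact ⟨z, hz, hpos⟩, hvSmem⟩
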